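/- Let S ⊆ k⟨X⟩ be a set of monic polynomials and < a monomial well order on X*. If every element f of the two-sided ideal Id(S) satisfies that its leading word f̄ contains the leading word s̄ of some s ∈ S as a subword (i.e., f̄ = a s̄ b for some a,b ∈ X*), then the set Irr(S) = {u ∈ X* : u ≠ a s̄ b for all s ∈ S, a,b ∈ X*} spans k⟨X⟩/Id(S) and is linearly independent modulo Id(S); hence it is a k-linear basis of k⟨X|S⟩. -/

import Mathlib

/-- `w` is the leading word of `f`: it occurs in `f` and dominates every word
occurring in `f`. -/
def IsLead {k X : Type*} [Field k] [LinearOrder (FreeMonoid X)]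
    (f : MonoidAlgebra k (FreeMonoid X)) (w : FreeMonoid X) : Prop :=
  w ∈ f.coeff.support ∧ ∀ u ∈ f.coeff.support, u ≤ w

/-- The two-sided ideal `Id(S)` of `k⟨X⟩` generated by `S`, as the span of
all elements `a·s·b` with `a, b` monomials. -/
noncomputable def IdS (k : Type*) {X : Type*} [Field k]
    (S : Set (MonoidAlgebra k (FreeMonoid X))) :
    Submodule k (MonoidAlgebra k (FreeMonoid X)) :=
  Submodule.span k {p | ∃ s ∈ S, ∃ a b : FreeMonoid X,
    p = (MonoidAlgebra.of k (FreeMonoid X) a) * s * (MonoidAlgebra.of k (FreeMonoid X) b)}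

/-- The set `Irr(S)` of words containing no leading word of `S` as a subword. -/
def IrrS {k X : Type*} [Field k] [LinearOrder (FreeMonoid X)]
    (S : Set (MonoidAlgebra k (FreeMonoid X))) : Set (FreeMonoid X) :=
  {u | ∀ s ∈ S, ∀ w a b : FreeMonoid X, IsLead s w → u ≠ a * w * b}

/-- (ii) ⟹ (iii) in the Composition-Diamond lemma: if every nonzero element
of `Id(S)` has leading word of the form `a s̄ b`, then `Irr(S)` is a linear
basis of `k⟨X | S⟩ = k⟨X⟩/Id(S)`. -/
theorem CD_lemma_ii_implies_iii {k X : Type*} [Field k] [LinearOrder (FreeMonoid X)]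
    (hwf : WellFoundedLT (FreeMonoid X))
    (hmono : ∀ u v w₁ w₂ : FreeMonoid X, u < v → w₁ * u * w₂ < w₁ * v * w₂)
    (S : Set (MonoidAlgebra k (FreeMonoid X)))
    (hmonic : ∀ s ∈ S, ∃ w : FreeMonoid X, IsLead s w ∧ s.coeff w = 1)
    (hlead : ∀ f ∈ IdS k S, f ≠ 0 →
      ∃ s ∈ S, ∃ w a b : FreeMonoid X, IsLead s w ∧ IsLead f (a * w * b)) :
    LinearIndependent k (fun u : IrrS S =>
      Submodule.Quotient.mk (p := IdS k S)
        (MonoidAlgebra.of k (FreeMonoid X) (u : FreeMonoid X))) ∧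
    Submodule.span k (Set.range (fun u : IrrS S =>
      Submodule.Quotient.mk (p := IdS k S)
        (MonoidAlgebra.of k (FreeMonoid X) (u : FreeMonoid X)))) = ⊤ := by
  classical
  set V : IrrS S → (MonoidAlgebra k (FreeMonoid X)) ⧸ (IdS k S) :=
    (fun u : IrrS S => Submodule.Quotient.mk (p := IdS k S)
      (MonoidAlgebra.of k (FreeMonoid X) (u : FreeMonoid X))) with hVdef
  set Msp := Submodule.span k (Set.range V) with hMspdef
  -- coefficient of `a u b` in `(of a) * s * (of b)` is the coefficient of `u` in `s`
  have hshift : ∀ (s : MonoidAlgebra k (FreeMonoid X)) (a b u : FreeMonoid X),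
      (MonoidAlgebra.of k (FreeMonoid X) a * s * MonoidAlgebra.of k (FreeMonoid X) b).coeff
        (a * u * b) = s.coeff u := by
    intro s a b u
    rw [MonoidAlgebra.of_apply, MonoidAlgebra.of_apply]
    set l : MonoidAlgebra k (FreeMonoid X) := MonoidAlgebra.single a (1:k) with hldef
    set r : MonoidAlgebra k (FreeMonoid X) := MonoidAlgebra.single b (1:k) with hrdef
    have h1 : (l * s * r).coeff (a * u * b) = (l * s).coeff (a * u) * 1 := by
      rw [hrdef]
      exact MonoidAlgebra.coeff_mul_single_eq_coeff_mul _ (fun c _ => mul_left_inj b)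
    have h2 : (l * s).coeff (a * u) = 1 * s.coeff u := by
      rw [hldef]
      exact MonoidAlgebra.coeff_single_mul_eq_mul_coeff _ (fun c _ => mul_right_inj a)
    rw [h1, h2, one_mul, mul_one]
  -- support of `(of a) * s * (of b)` consists of words `a v b`
  have hsupport : ∀ (s : MonoidAlgebra k (FreeMonoid X)) (a b : FreeMonoid X),
      ∀ u ∈ (MonoidAlgebra.of k (FreeMonoid X) a * s * MonoidAlgebra.of k (FreeMonoid X) b).coeff.support,
      ∃ v ∈ s.coeff.support, u = a * v * b := by
    intro s a b u hu
    rw [MonoidAlgebra.of_apply, MonoidAlgebra.of_apply] at hu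
    have h1 := MonoidAlgebra.support_coeff_mul_single_subset
      ((MonoidAlgebra.single a (1:k) : MonoidAlgebra k (FreeMonoid X)) * s) 1 b hu
    obtain ⟨c, hc, rfl⟩ := Finset.mem_image.mp h1
    have h2 := MonoidAlgebra.support_coeff_single_mul_subset s (1:k) a hc
    obtain ⟨v, hv, rfl⟩ := Finset.mem_image.mp h2
    exact ⟨v, hv, rfl⟩
  have hmono' : ∀ u v w₁ w₂ : FreeMonoid X, u ≤ v → w₁ * u * w₂ ≤ w₁ * v * w₂ := by
    intro u v w₁ w₂ h
    rcases h.lt_or_eq with h | rfl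
    · exact (hmono u v w₁ w₂ h).le
    · exact le_rfl
  have hlead_unique : ∀ (f : MonoidAlgebra k (FreeMonoid X)) (w₁ w₂ : FreeMonoid X),
      IsLead f w₁ → IsLead f w₂ → w₁ = w₂ :=
    fun f w₁ w₂ h1 h2 => le_antisymm (h2.2 _ h1.1) (h1.2 _ h2.1)
  -- spanning: reduction by well-founded induction on the leading word
  have step : ∀ w : FreeMonoid X,
      (∀ v, v < w → ∀ f : MonoidAlgebra k (FreeMonoid X), (∀ u ∈ f.coeff.support, u ≤ v) →
        Submodule.Quotient.mk (p := IdS k S) f ∈ Msp) →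
      ∀ f : MonoidAlgebra k (FreeMonoid X), (∀ u ∈ f.coeff.support, u ≤ w) →
        Submodule.Quotient.mk (p := IdS k S) f ∈ Msp := by
    intro w IH f hf
    have key : ∀ g : MonoidAlgebra k (FreeMonoid X), (∀ u ∈ g.coeff.support, u < w) →
        Submodule.Quotient.mk (p := IdS k S) g ∈ Msp := by
      intro g hg
      by_cases hg0 : g = 0
      · subst hg0
        simpa using Submodule.zero_mem Msp
      · have hne : g.coeff.support.Nonempty :=
          Finsupp.support_nonempty_iff.mpr (fun h => hg0 (MonoidAlgebra.coeff_eq_zero.mp h))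
        exact IH (g.coeff.support.max' hne) (hg _ (g.coeff.support.max'_mem hne)) g
          (fun u hu => g.coeff.support.le_max' u hu)
    by_cases hw : w ∈ f.coeff.support
    · by_cases hirr : w ∈ IrrS S
      · -- leading word is irreducible: split off its monomial
        set g := f - MonoidAlgebra.single w (f.coeff w) with hgdef
        have hgw : g.coeff w = 0 := by
          have h1 : g.coeff w = f.coeff w - (MonoidAlgebra.single w (f.coeff w) : MonoidAlgebra k (FreeMonoid X)).coeff w := by
            rw [hgdef, MonoidAlgebra.coeff_sub, Finsupp.sub_apply]
          rw [h1, MonoidAlgebra.coeff_single, Finsupp.single_eq_same, sub_self]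
        have hgsupp : ∀ u ∈ g.coeff.support, u < w := by
          intro u hu
          have hne : u ≠ w := by
            intro h; rw [h] at hu; exact (Finsupp.mem_support_iff.mp hu) hgw
          have heq : g.coeff u = f.coeff u := by
            have h1 : g.coeff u = f.coeff u - (MonoidAlgebra.single w (f.coeff w) : MonoidAlgebra k (FreeMonoid X)).coeff u := by
              rw [hgdef, MonoidAlgebra.coeff_sub, Finsupp.sub_apply]
            rw [h1, MonoidAlgebra.coeff_single, Finsupp.single_eq_of_ne' (Ne.symm hne), sub_zero]
          have hu' : u ∈ f.coeff.support :=
            Finsupp.mem_support_iff.mpr (heq ▸ Finsupp.mem_support_iff.mp hu)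
          exact lt_of_le_of_ne (hf u hu') hne
        have h1 : Submodule.Quotient.mk (p := IdS k S) g ∈ Msp := key g hgsupp
        have h2 : Submodule.Quotient.mk (p := IdS k S)
            (MonoidAlgebra.single w (f.coeff w)) ∈ Msp := by
          have hm : V ⟨w, hirr⟩ ∈ Msp := Submodule.subset_span ⟨⟨w, hirr⟩, rfl⟩
          have hsm : MonoidAlgebra.single w (f.coeff w)
              = (f.coeff w) • MonoidAlgebra.of k (FreeMonoid X) w := by
            rw [MonoidAlgebra.of_apply, MonoidAlgebra.smul_single', mul_one]
          rw [hsm, Submodule.Quotient.mk_smul]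
          exact Submodule.smul_mem _ _ hm
        have hfe : f = g + MonoidAlgebra.single w (f.coeff w) := by
          rw [hgdef, sub_add_cancel]
        rw [hfe, Submodule.Quotient.mk_add]
        exact Submodule.add_mem _ h1 h2
      · -- leading word is reducible: subtract a multiple of `(of a) * s * (of b)`
        simp only [IrrS, Set.mem_setOf_eq] at hirr
        push_neg at hirr
        obtain ⟨s, hs, ws, a, b, hws, hw_eq⟩ := hirr
        obtain ⟨ws', hws', hcoeff⟩ := hmonic s hs
        obtain rfl : ws' = ws := hlead_unique s ws' ws hws' hws
        set h := MonoidAlgebra.of k (FreeMonoid X) a * s * MonoidAlgebra.of k (FreeMonoid X) b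
          with hhdef
        have hh_mem : h ∈ IdS k S := Submodule.subset_span ⟨s, hs, a, b, rfl⟩
        have hhw : h.coeff w = 1 := by
          rw [hw_eq, hhdef]; exact (hshift s a b ws').trans hcoeff
        have hhsupp : ∀ u ∈ h.coeff.support, u ≤ w := by
          intro u hu
          obtain ⟨v, hv, rfl⟩ := hsupport s a b u hu
          rw [hw_eq]
          exact hmono' v ws' a b (hws.2 v hv)
        set g := f - (f.coeff w) • h with hgdef
        have hgw : g.coeff w = 0 := by
          have h1 : g.coeff w = f.coeff w - (f.coeff w • h).coeff w := by
            rw [hgdef, MonoidAlgebra.coeff_sub, Finsupp.sub_apply]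
          have h2 : (f.coeff w • h).coeff w = f.coeff w * h.coeff w := MonoidAlgebra.coeff_smul_apply _ _ _
          rw [h1, h2, hhw, mul_one, sub_self]
        have hgsupp : ∀ u ∈ g.coeff.support, u < w := by
          intro u hu
          have hne : u ≠ w := by
            intro hq; rw [hq] at hu; exact (Finsupp.mem_support_iff.mp hu) hgw
          refine lt_of_le_of_ne ?_ hne
          have hgu : g.coeff u ≠ 0 := Finsupp.mem_support_iff.mp hu
          by_cases hfu : f.coeff u = 0
          · have hhu : h.coeff u ≠ 0 := by
              intro hz; apply hgu
              have h1 : g.coeff u = f.coeff u - (f.coeff w • h).coeff u := by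
                rw [hgdef, MonoidAlgebra.coeff_sub, Finsupp.sub_apply]
              have h2 : (f.coeff w • h).coeff u = f.coeff w * h.coeff u := MonoidAlgebra.coeff_smul_apply _ _ _
              rw [h1, h2, hfu, hz, mul_zero, sub_zero]
            exact hhsupp u (Finsupp.mem_support_iff.mpr hhu)
          · exact hf u (Finsupp.mem_support_iff.mpr hfu)
        have hmkg : Submodule.Quotient.mk (p := IdS k S) g
            = Submodule.Quotient.mk (p := IdS k S) f := by
          rw [Submodule.Quotient.eq]
          have : g - f = -((f.coeff w) • h) := by rw [hgdef]; abel
          rw [this]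
          exact Submodule.neg_mem _ (Submodule.smul_mem _ _ hh_mem)
        rw [← hmkg]
        exact key g hgsupp
    · have hlt : ∀ u ∈ f.coeff.support, u < w :=
        fun u hu => lt_of_le_of_ne (hf u hu) (fun h => hw (h ▸ hu))
      exact key f hlt
  have main : ∀ w : FreeMonoid X, ∀ f : MonoidAlgebra k (FreeMonoid X),
      (∀ u ∈ f.coeff.support, u ≤ w) → Submodule.Quotient.mk (p := IdS k S) f ∈ Msp :=
    fun w => hwf.wf.induction w step
  have hspan : Msp = ⊤ := by
    rw [eq_top_iff]
    rintro x -
    obtain ⟨f, rfl⟩ := Submodule.Quotient.mk_surjective (IdS k S) x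
    by_cases h0 : f = 0
    · subst h0; simpa using Submodule.zero_mem Msp
    · have hne : f.coeff.support.Nonempty :=
        Finsupp.support_nonempty_iff.mpr (fun h => h0 (MonoidAlgebra.coeff_eq_zero.mp h))
      exact main (f.coeff.support.max' hne) f (fun u hu => f.coeff.support.le_max' u hu)
  -- linear independence
  have hli0 : LinearIndependent k
      (fun u : IrrS S => (MonoidAlgebra.of k (FreeMonoid X) (u : FreeMonoid X))) := by
    have hb := (MonoidAlgebra.basis (FreeMonoid X) k).linearIndependent
    exact hb.comp (fun u : IrrS S => (u : FreeMonoid X)) Subtype.coe_injective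
  have hdisj : Disjoint (Submodule.span k (Set.range
      (fun u : IrrS S => (MonoidAlgebra.of k (FreeMonoid X) (u : FreeMonoid X)))))
      (LinearMap.ker (IdS k S).mkQ) := by
    rw [Submodule.ker_mkQ, Submodule.disjoint_def]
    intro g hg hgN
    by_contra hg0
    obtain ⟨s, hs, ws, a, b, hws, hlf⟩ := hlead g hgN hg0
    have hsub : ∀ u ∈ g.coeff.support, u ∈ IrrS S := by
      refine Submodule.span_induction
        (p := fun x _ => ∀ u ∈ x.coeff.support, u ∈ IrrS S) ?_ ?_ ?_ ?_ hg
      · rintro x ⟨u, rfl⟩ t ht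
        have ht' : t ∈ (MonoidAlgebra.of k (FreeMonoid X) (u : FreeMonoid X)).coeff.support := ht
        rw [MonoidAlgebra.of_apply, MonoidAlgebra.coeff_single] at ht'
        have hts := Finsupp.support_single_subset ht'
        rw [Finset.mem_singleton] at hts
        rw [hts]; exact u.2
      · intro u hu; simp at hu
      · intro x y _ _ hx hy u hu
        rw [MonoidAlgebra.coeff_add] at hu
        rcases Finset.mem_union.mp (Finsupp.support_add hu) with h | h
        · exact hx u h
        · exact hy u h
      · intro c x _ hx u hu
        rw [MonoidAlgebra.coeff_smul] at hu
        exact hx u (Finsupp.support_smul hu)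
    exact hsub _ hlf.1 s hs ws a b hws rfl
  have hli : LinearIndependent k V := by
    exact hli0.map (f := (IdS k S).mkQ) hdisj
  exact ⟨hli, hspan⟩
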